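/- One-step centered clipping: Let y_1,...,y_W ∈ R^D with regular set R of size R = (1−δ)W, δ < 1/2, ȳ = (1/R)Σ_{w∈R} y_w. Let v_0 satisfy ‖v_0 − ȳ‖² ≤ max_{w∈R}‖y_w − ȳ‖² and set τ = sqrt(4(1−δ) max_{w∈R}‖y_w − ȳ‖² / δ). Then the output CC = v_0 + (1/W)Σ_{w=1}^W CLIP(y_w − v_0, τ) satisfies ‖CC − ȳ‖ ≤ √(24δ) · max_{w∈R} ‖y_w − ȳ‖. -/

import Mathlib

set_option maxHeartbeats 1000000


/-- Clipping operator: `CLIP(z, τ) = z` if `‖z‖ ≤ τ`, else `(τ/‖z‖) z`. -/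
noncomputable def clip {E : Type*} [NormedAddCommGroup E] [NormedSpace ℝ E]
    (z : E) (τ : ℝ) : E :=
  if ‖z‖ ≤ τ then z else (τ / ‖z‖) • z

/-- one-step centered clipping. With regular set `Reg` of size `R = (1−δ)W`,
`0 < δ < 1/2`, starting point `v0` with `‖v0 − ȳ‖² ≤ M² = max_{w∈Reg}‖y w − ȳ‖²`, and
clipping threshold `τ = √(4(1−δ)M²/δ)`, the output
`CC = v0 + (1/W) Σ_w CLIP(y w − v0, τ)` satisfies `‖CC − ȳ‖ ≤ √(24δ) · M`. -/
theorem stmt_10 (W R D : ℕ) (δ : ℝ) (hδ0 : 0 < δ) (hδ : δ < 1 / 2)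
    (hR : (R : ℝ) = (1 - δ) * W)
    (Reg : Finset (Fin W)) (hReg : Reg.Nonempty) (hcard : Reg.card = R)
    (y : Fin W → EuclideanSpace ℝ (Fin D)) (v0 ybar : EuclideanSpace ℝ (Fin D))
    (hybar : ybar = (R : ℝ)⁻¹ • ∑ w ∈ Reg, y w)
    (M : ℝ) (hM : M = Reg.sup' hReg fun w => ‖y w - ybar‖)
    (hv0 : ‖v0 - ybar‖ ^ 2 ≤ M ^ 2)
    (τ : ℝ) (hτ : τ = Real.sqrt (4 * (1 - δ) * M ^ 2 / δ)) :
    ‖v0 + (W : ℝ)⁻¹ • ∑ w : Fin W, clip (y w - v0) τ - ybar‖ ≤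
      Real.sqrt (24 * δ) * M := by
  have hW0 : 0 < W := hReg.choose.pos
  have hWR : (0:ℝ) < W := by exact_mod_cast hW0
  have hR0 : 0 < R := hcard ▸ Finset.card_pos.mpr hReg
  have hRR : (0:ℝ) < R := by exact_mod_cast hR0
  have hRleW : R ≤ W := by
    have : (R:ℝ) ≤ W := by nlinarith
    exact_mod_cast this
  have hM0 : 0 ≤ M := by
    obtain ⟨w, hw⟩ := hReg
    calc (0:ℝ) ≤ ‖y w - ybar‖ := norm_nonneg _
    _ ≤ M := by rw [hM]; exact Finset.le_sup' (fun w => ‖y w - ybar‖) hw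
  have hMle : ∀ w ∈ Reg, ‖y w - ybar‖ ≤ M := by
    intro w hw; rw [hM]; exact Finset.le_sup' (fun w => ‖y w - ybar‖) hw
  have hv0' : ‖v0 - ybar‖ ≤ M := by nlinarith [norm_nonneg (v0 - ybar)]
  have hτ0 : 0 ≤ τ := hτ ▸ Real.sqrt_nonneg _
  have hτ2M : 2 * M ≤ τ := by
    rw [hτ]
    have h4 : (2*M)^2 ≤ 4 * (1 - δ) * M ^ 2 / δ := by
      rw [le_div_iff₀ hδ0]; nlinarith [sq_nonneg M]
    calc 2*M = Real.sqrt ((2*M)^2) := by rw [Real.sqrt_sq (by positivity)]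
    _ ≤ _ := Real.sqrt_le_sqrt h4
  have hclip_reg : ∀ w ∈ Reg, clip (y w - v0) τ = y w - v0 := by
    intro w hw
    have h1 : ‖y w - v0‖ ≤ τ := by
      calc ‖y w - v0‖ = ‖(y w - ybar) - (v0 - ybar)‖ := by abel_nf
      _ ≤ ‖y w - ybar‖ + ‖v0 - ybar‖ := norm_sub_le _ _
      _ ≤ M + M := add_le_add (hMle w hw) hv0'
      _ ≤ τ := by linarith
    simp [clip, h1]
  have hclip_norm : ∀ z : EuclideanSpace ℝ (Fin D), ‖clip z τ‖ ≤ τ := by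
    intro z
    unfold clip
    split_ifs with h
    · exact h
    · push_neg at h
      have hz : 0 < ‖z‖ := lt_of_le_of_lt hτ0 h
      rw [norm_smul, Real.norm_eq_abs, abs_div, abs_of_nonneg hτ0,
        abs_of_pos hz, div_mul_cancel₀ _ hz.ne']
  have h1 : ∑ w ∈ Reg, clip (y w - v0) τ = (R:ℝ) • (ybar - v0) := by
    calc ∑ w ∈ Reg, clip (y w - v0) τ = ∑ w ∈ Reg, (y w - v0) :=
          Finset.sum_congr rfl hclip_reg
    _ = (∑ w ∈ Reg, y w) - (R:ℝ) • v0 := by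
        rw [Finset.sum_sub_distrib, Finset.sum_const, hcard, Nat.cast_smul_eq_nsmul]
    _ = (R:ℝ) • ybar - (R:ℝ) • v0 := by
        rw [hybar, smul_smul, mul_inv_cancel₀ hRR.ne', one_smul]
    _ = (R:ℝ) • (ybar - v0) := (smul_sub _ _ _).symm
  have hsum : ∑ w : Fin W, clip (y w - v0) τ
      = (R:ℝ) • (ybar - v0) + ∑ w ∈ Regᶜ, clip (y w - v0) τ := by
    rw [← Finset.sum_add_sum_compl Reg, h1]
  set S := ∑ w ∈ Regᶜ, clip (y w - v0) τ with hS
  have hdecomp : v0 + (W : ℝ)⁻¹ • ∑ w : Fin W, clip (y w - v0) τ - ybar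
      = δ • (v0 - ybar) + (W:ℝ)⁻¹ • S := by
    rw [hsum, smul_add, smul_smul]
    have hWRd : (W:ℝ)⁻¹ * (R:ℝ) = 1 - δ := by
      field_simp [hR]
      linarith
    rw [hWRd]
    module
  rw [hdecomp]
  have hSnorm : ‖S‖ ≤ (W - R : ℝ) * τ := by
    calc ‖S‖ ≤ ∑ w ∈ Regᶜ, ‖clip (y w - v0) τ‖ := norm_sum_le _ _
    _ ≤ ∑ _w ∈ Regᶜ, τ := Finset.sum_le_sum fun w _ => hclip_norm _
    _ = (Regᶜ.card : ℝ) * τ := by rw [Finset.sum_const, nsmul_eq_mul]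
    _ = (W - R : ℝ) * τ := by
        rw [Finset.card_compl, hcard, Fintype.card_fin, Nat.cast_sub hRleW]
  have hWRδ : (W:ℝ) - R = δ * W := by rw [hR]; ring
  have key : ‖δ • (v0 - ybar) + (W:ℝ)⁻¹ • S‖ ≤ δ * M + δ * τ := by
    calc ‖δ • (v0 - ybar) + (W:ℝ)⁻¹ • S‖ ≤ ‖δ • (v0 - ybar)‖ + ‖(W:ℝ)⁻¹ • S‖ :=
          norm_add_le _ _
    _ = δ * ‖v0 - ybar‖ + (W:ℝ)⁻¹ * ‖S‖ := by
        rw [norm_smul, norm_smul, Real.norm_eq_abs, Real.norm_eq_abs,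
          abs_of_pos hδ0, abs_of_pos (inv_pos.mpr hWR)]
    _ ≤ δ * M + (W:ℝ)⁻¹ * ((W - R : ℝ) * τ) := by gcongr
    _ = δ * M + δ * τ := by rw [hWRδ]; field_simp
  refine key.trans ?_
  -- scalar inequality: δ*M + δ*τ ≤ √(24δ)*M
  have hsδ0 : 0 < Real.sqrt δ := Real.sqrt_pos.mpr hδ0
  have hτle : τ ≤ 2 * M / Real.sqrt δ := by
    rw [hτ]
    have hle : 4 * (1 - δ) * M ^ 2 / δ ≤ (2 * M / Real.sqrt δ)^2 := by
      rw [div_pow, Real.sq_sqrt hδ0.le]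
      gcongr
      nlinarith [sq_nonneg M]
    calc Real.sqrt (4 * (1 - δ) * M ^ 2 / δ) ≤ Real.sqrt ((2 * M / Real.sqrt δ)^2) :=
          Real.sqrt_le_sqrt hle
    _ = 2 * M / Real.sqrt δ := Real.sqrt_sq (by positivity)
  have hδτ : δ * τ ≤ 2 * Real.sqrt δ * M := by
    have h2 := mul_le_mul_of_nonneg_left hτle hδ0.le
    refine h2.trans_eq ?_
    have hds : δ / Real.sqrt δ = Real.sqrt δ := Real.div_sqrt
    calc δ * (2*M/Real.sqrt δ) = 2 * M * (δ / Real.sqrt δ) := by ring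
    _ = 2 * Real.sqrt δ * M := by rw [hds]; ring
  have hδM : δ * M ≤ Real.sqrt δ * M := by
    have : δ ≤ Real.sqrt δ := by
      calc δ = Real.sqrt (δ^2) := (Real.sqrt_sq hδ0.le).symm
      _ ≤ Real.sqrt δ := Real.sqrt_le_sqrt (by nlinarith)
    exact mul_le_mul_of_nonneg_right this hM0
  have hs24 : (3:ℝ) ≤ Real.sqrt 24 := by
    have h9 : (3:ℝ) = Real.sqrt 9 := by
      rw [show (9:ℝ) = 3^2 by norm_num, Real.sqrt_sq (by norm_num)]
    rw [h9]
    exact Real.sqrt_le_sqrt (by norm_num)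
  calc δ * M + δ * τ ≤ Real.sqrt δ * M + 2 * Real.sqrt δ * M := add_le_add hδM hδτ
  _ = 3 * Real.sqrt δ * M := by ring
  _ ≤ Real.sqrt 24 * Real.sqrt δ * M := by gcongr
  _ = Real.sqrt (24*δ) * M := by rw [← Real.sqrt_mul (by norm_num)]
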